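/- The complement of I_M in G decomposes as the disjoint union over 0 ≤ k < l ≤ M-1 of the sets I_{l+1}(e_k + e_l), together with the union over 0 ≤ k ≤ M-1 of the sets I_M(e_k). -/
import Mathlib


open MeasureTheory Finset

noncomputable section

/-- The dyadic group: countable product of `ZMod 2`. -/
abbrev G := ℕ → ZMod 2

instance : MeasurableSpace (ZMod 2) := ⊤

/-- Walsh–Paley function `w n`. -/
def walsh (n : ℕ) (x : G) : ℝ :=
  ∏ k ∈ Finset.range (n + 1), if n.testBit k then (-1 : ℝ) ^ (x k).val else 1

/-- Walsh–Dirichlet kernel `D n = ∑_{k<n} w k`. -/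
def Dker (n : ℕ) (x : G) : ℝ := ∑ k ∈ Finset.range n, walsh k x

/-- Walsh–Fejér kernel `K n = (1/n) ∑_{k=1}^n D k`. -/
def Kker (n : ℕ) (x : G) : ℝ := (1 / (n : ℝ)) * ∑ k ∈ Finset.range n, Dker (k + 1) x

/-- Dyadic cylinder `I_n(y)`: points agreeing with `y` in the first `n` coordinates. -/
def cyl (n : ℕ) (y : G) : Set G := {x | ∀ j < n, x j = y j}

/-- `I_n = I_n(0)`. -/
def Iset (n : ℕ) : Set G := cyl n 0

/-- The generator `e t`, with a single `1` in coordinate `t`. -/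
def e (t : ℕ) : G := fun j => if j = t then 1 else 0

/-- the disjoint decomposition of the complement of `I_M`. -/
lemma zmod2_one_of_ne {a : ZMod 2} (h : a ≠ 0) : a = 1 := by
  rcases (by decide : ∀ b : ZMod 2, b = 0 ∨ b = 1) a with h0 | h1
  · exact absurd h0 h
  · exact h1

lemma e_self (t : ℕ) : e t t = 1 := by simp [e]
lemma e_ne {j t : ℕ} (h : j ≠ t) : e t j = 0 := by simp [e, h]

lemma disj_of_center_ne {n n' : ℕ} {c c' : G} (j : ℕ) (hj : j < n) (hj' : j < n')
    (h : c j ≠ c' j) : Disjoint (cyl n c) (cyl n' c') := by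
  rw [Set.disjoint_left]
  intro x hx hx'
  exact h ((hx j hj).symm.trans (hx' j hj'))

lemma ee_eq_one {k l j : ℕ} (hkl : k ≠ l) (h : j = k ∨ j = l) : (e k + e l) j = 1 := by
  rcases h with rfl | rfl
  · rw [Pi.add_apply, e_self, e_ne hkl]; ring
  · rw [Pi.add_apply, e_self, e_ne (Ne.symm hkl)]; ring

lemma ee_eq_zero {k l j : ℕ} (hk : j ≠ k) (hl : j ≠ l) : (e k + e l) j = 0 := by
  rw [Pi.add_apply, e_ne hk, e_ne hl]; ring

theorem eq_part (M : ℕ) :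
    ((Iset M)ᶜ =
      (⋃ (k : ℕ) (l : ℕ) (_ : k < l) (_ : l < M), cyl (l + 1) (e k + e l)) ∪
        ⋃ (k : ℕ) (_ : k < M), cyl M (e k)) := by
  classical
  ext x
  simp only [Set.mem_compl_iff, Set.mem_union, Set.mem_iUnion]
  constructor
  · intro hx
    have hex : ∃ j, j < M ∧ x j ≠ 0 := by
      by_contra h
      push_neg at h
      exact hx (fun j hj => h j hj)
    set k := Nat.find hex with hkdef
    obtain ⟨hkM, hk1⟩ := Nat.find_spec hex
    have hk1' : x k = 1 := zmod2_one_of_ne hk1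
    have hkmin : ∀ j < k, x j = 0 := fun j hj => by
      have h := Nat.find_min hex hj
      push_neg at h
      exact h (hj.trans hkM)
    by_cases hl : ∃ j, (k < j ∧ j < M) ∧ x j ≠ 0
    · left
      set l := Nat.find hl with hldef
      obtain ⟨⟨hkl, hlM⟩, hl1⟩ := Nat.find_spec hl
      have hlmin : ∀ j, k < j → j < l → x j = 0 := fun j hj hjl => by
        have h := Nat.find_min hl hjl
        push_neg at h
        exact h ⟨hj, hjl.trans hlM⟩
      refine ⟨k, l, hkl, hlM, fun j hj => ?_⟩
      rcases eq_or_ne j k with rfl | hjk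
      · rw [hk1', ee_eq_one hkl.ne (Or.inl rfl)]
      rcases eq_or_ne j l with rfl | hjl
      · rw [zmod2_one_of_ne hl1, ee_eq_one hkl.ne (Or.inr rfl)]
      rw [ee_eq_zero hjk hjl]
      rcases lt_or_gt_of_ne hjk with h | h
      · exact hkmin j h
      · exact hlmin j h (by omega)
    · right
      push_neg at hl
      refine ⟨k, hkM, fun j hj => ?_⟩
      rcases eq_or_ne j k with rfl | hjk
      · rw [hk1', e_self]
      rw [e_ne hjk]
      rcases lt_or_gt_of_ne hjk with h | h
      · exact hkmin j h
      · exact hl j ⟨h, hj⟩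
  · rintro (⟨k, l, hkl, hlM, hx⟩ | ⟨k, hkM, hx⟩) <;> intro hmem
    · have h1 := hx k (by omega)
      have h0 := hmem k (by omega)
      rw [ee_eq_one hkl.ne (Or.inl rfl)] at h1
      rw [Pi.zero_apply] at h0
      rw [h0] at h1
      exact one_ne_zero h1.symm
    · have h1 := hx k hkM
      have h0 := hmem k hkM
      rw [e_self] at h1
      rw [Pi.zero_apply] at h0
      rw [h0] at h1
      exact one_ne_zero h1.symm

theorem disj12 (M : ℕ) : ∀ k l k' l', k < l → l < M → k' < l' → l' < M → (k, l) ≠ (k', l') →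
      Disjoint (cyl (l + 1) (e k + e l)) (cyl (l' + 1) (e k' + e l')) := by
  have key : ∀ k l k' l', k < l → k' < l' → l ≤ l' → (k, l) ≠ (k', l') →
      Disjoint (cyl (l + 1) (e k + e l)) (cyl (l' + 1) (e k' + e l')) := by
    intro k l k' l' hkl hkl' hll hne
    rcases eq_or_ne l l' with rfl | hll'
    · have hkk : k ≠ k' := fun h => hne (by rw [h])
      refine disj_of_center_ne (min k k') (by omega) (by omega) ?_
      rcases min_cases k k' with ⟨hm, hle⟩ | ⟨hm, hle⟩ <;> rw [hm]
      · rw [ee_eq_one hkl.ne (Or.inl rfl), ee_eq_zero (by omega) (by omega)]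
        exact one_ne_zero
      · rw [ee_eq_one hkl'.ne (Or.inl rfl), ee_eq_zero (by omega) (by omega)]
        exact zero_ne_one
    · have hll2 : l < l' := lt_of_le_of_ne hll hll'
      rcases eq_or_ne l k' with rfl | hlk'
      · refine disj_of_center_ne k (by omega) (by omega) ?_
        rw [ee_eq_one hkl.ne (Or.inl rfl), ee_eq_zero (by omega) (by omega)]
        exact one_ne_zero
      · refine disj_of_center_ne l (by omega) (by omega) ?_
        rw [ee_eq_one hkl.ne (Or.inr rfl), ee_eq_zero hlk' (by omega)]
        exact one_ne_zero
  intro k l k' l' h1 h2 h3 h4 h5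
  rcases le_total l l' with h | h
  · exact key k l k' l' h1 h3 h h5
  · exact (key k' l' k l h3 h1 h (fun he => h5 he.symm)).symm

theorem disj3 (M : ℕ) : ∀ k k', k < M → k' < M → k ≠ k' →
    Disjoint (cyl M (e k)) (cyl M (e k')) := by
  intro k k' hk hk' hne
  refine disj_of_center_ne (min k k') (by omega) (by omega) ?_
  rcases min_cases k k' with ⟨hm, hle⟩ | ⟨hm, hle⟩ <;> rw [hm]
  · rw [e_self, e_ne hne]; exact one_ne_zero
  · rw [e_self, e_ne (Ne.symm hne)]; exact zero_ne_one

theorem disj4 (M : ℕ) : ∀ k l k', k < l → l < M → k' < M →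
    Disjoint (cyl (l + 1) (e k + e l)) (cyl M (e k')) := by
  intro k l k' hkl hlM hk'
  rcases eq_or_ne k k' with rfl | hne
  · refine disj_of_center_ne l (by omega) (by omega) ?_
    rw [ee_eq_one hkl.ne (Or.inr rfl), e_ne (Ne.symm hkl.ne)]
    exact one_ne_zero
  rcases lt_or_gt_of_ne hne with h | h
  · refine disj_of_center_ne k (by omega) (by omega) ?_
    rw [ee_eq_one hkl.ne (Or.inl rfl), e_ne hne]
    exact one_ne_zero
  · refine disj_of_center_ne k' (by omega) (by omega) ?_
    rw [ee_eq_zero (Ne.symm hne) (by omega), e_self]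
    exact zero_ne_one

theorem complement_decomposition (M : ℕ) :
    ((Iset M)ᶜ =
      (⋃ (k : ℕ) (l : ℕ) (_ : k < l) (_ : l < M), cyl (l + 1) (e k + e l)) ∪
        ⋃ (k : ℕ) (_ : k < M), cyl M (e k)) ∧
    (∀ k l k' l', k < l → l < M → k' < l' → l' < M → (k, l) ≠ (k', l') →
      Disjoint (cyl (l + 1) (e k + e l)) (cyl (l' + 1) (e k' + e l'))) ∧
    (∀ k k', k < M → k' < M → k ≠ k' → Disjoint (cyl M (e k)) (cyl M (e k'))) ∧
    (∀ k l k', k < l → l < M → k' < M →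
      Disjoint (cyl (l + 1) (e k + e l)) (cyl M (e k'))) :=
  ⟨eq_part M, disj12 M, disj3 M, disj4 M⟩
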